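/- Let z ∈ Im(𝕆') with q(z) = z·z = -1 (i.e. z ∈ 𝐇^{4,2}) and let w ∈ z^⊥ ⊆ Im(𝕆'). Then the map J_z(w) = z × w satisfies J_z² = -Id on z^⊥ and q(J_z(w)) = q(w); i.e. left cross-multiplication by z is a complex structure on z^⊥ compatible with the restricted quadratic form. -/

import Mathlib

open scoped Quaternion

noncomputable section

/-- The split quaternions: `j² = -1`, `δ² = ε² = 1`, `j·δ = -δ·j = ε`
(realized as `i, j, k` in `ℍ[ℝ, -1, 1]`). -/
abbrev H' : Type := ℍ[ℝ, -1, 1]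

/-- The split octonions, as pairs of split quaternions (Cayley–Dickson doubling). -/
abbrev SplitOct : Type := H' × H'

namespace SplitOct

/-- Split octonion multiplication:
`(x₁,y₁)·(x₂,y₂) = (x₁x₂ - ȳ₂y₁, y₂x₁ + y₁x̄₂)`. -/
def omul (z w : SplitOct) : SplitOct :=
  (z.1 * w.1 - star w.2 * z.2, w.2 * z.1 + z.2 * star w.1)

scoped infixl:70 " ⬝ " => omul

/-- The unit `1 = (1,0)`. -/
def oone : SplitOct := (1, 0)

/-- Octonion conjugation `(x,y) ↦ (x̄, -y)`. -/
def oconj (z : SplitOct) : SplitOct := (star z.1, -z.2)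

/-- Real part. -/
def oRe (z : SplitOct) : ℝ := z.1.re

/-- Imaginary part, as a split octonion. -/
def oIm (z : SplitOct) : SplitOct := (z.1 - algebraMap ℝ H' z.1.re, z.2)

/-- Membership in the imaginary split octonions `Im(𝕆')`. -/
def IsIm (z : SplitOct) : Prop := z.1.re = 0

/-- The bilinear form `⟨z,w⟩ = Re (z·w)` on imaginary split octonions. -/
def oin (z w : SplitOct) : ℝ := oRe (z ⬝ w)

/-- The cross product `z × w = Im (z·w)`. -/
def ocross (z w : SplitOct) : SplitOct := oIm (z ⬝ w)

/-- The quadratic form `q(z) = ⟨z,z⟩`. -/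
def q (z : SplitOct) : ℝ := oin z z

def j : SplitOct := ((⟨0,1,0,0⟩ : H'), 0)
def δ' : SplitOct := ((⟨0,0,1,0⟩ : H'), 0)
def ε' : SplitOct := ((⟨0,0,0,1⟩ : H'), 0)
def ℓ' : SplitOct := (0, 1)
def jℓ : SplitOct := (0, (⟨0,1,0,0⟩ : H'))
def δℓ : SplitOct := (0, (⟨0,0,1,0⟩ : H'))
def εℓ : SplitOct := (0, (⟨0,0,0,1⟩ : H'))

end SplitOct

set_option maxHeartbeats 1000000 in
open SplitOct in
/-- For `z ∈ 𝐇^{4,2}` (an imaginary split octonion with `q(z) = -1`)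
and `w ∈ z^⊥ ⊆ Im(𝕆')`, the map `J_z(w) = z × w` preserves `z^⊥`, satisfies
`J_z² = -Id` on `z^⊥`, and is compatible with `q`: `q(J_z w) = q(w)`. -/
theorem left_cross_multiplication_complex_structure :
    ∀ z : SplitOct, IsIm z → q z = -1 →
      ∀ w : SplitOct, IsIm w → oin z w = 0 →
        IsIm (ocross z w) ∧ oin z (ocross z w) = 0 ∧
        ocross z (ocross z w) = -w ∧ q (ocross z w) = q w := by

  rintro ⟨⟨a0,a1,a2,a3⟩,⟨b0,b1,b2,b3⟩⟩ hz hq ⟨⟨c0,c1,c2,c3⟩,⟨d0,d1,d2,d3⟩⟩ hw hp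
  simp only [IsIm, q, oin, oRe, omul, ocross, oIm, QuaternionAlgebra.ext_iff,
    QuaternionAlgebra.re_mul, QuaternionAlgebra.imI_mul, QuaternionAlgebra.imJ_mul,
    QuaternionAlgebra.imK_mul, QuaternionAlgebra.re_add, QuaternionAlgebra.imI_add, QuaternionAlgebra.imJ_add, QuaternionAlgebra.imK_add, QuaternionAlgebra.re_sub, QuaternionAlgebra.imI_sub,
    QuaternionAlgebra.imJ_sub, QuaternionAlgebra.imK_sub, QuaternionAlgebra.re_star,
    QuaternionAlgebra.imI_star, QuaternionAlgebra.imJ_star, QuaternionAlgebra.imK_star,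
    QuaternionAlgebra.algebraMap_eq, Prod.ext_iff, Prod.fst_neg, Prod.snd_neg,
    QuaternionAlgebra.re_neg, QuaternionAlgebra.imI_neg, QuaternionAlgebra.imJ_neg,
    QuaternionAlgebra.imK_neg] at *
  obtain ⟨rfl⟩ := hz
  obtain ⟨rfl⟩ := hw
  refine ⟨by linarith, by ring_nf at hp ⊢, ?_, ?_⟩
  · and_intros <;> first
      | ring1
      | linear_combination c1*hq - a1*hp
      | linear_combination c2*hq - a2*hp
      | linear_combination c3*hq - a3*hp
      | linear_combination d0*hq - b0*hp
      | linear_combination d1*hq - b1*hp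
      | linear_combination d2*hq - b2*hp
      | linear_combination d3*hq - b3*hp
  · linear_combination (-(-c1^2+c2^2+c3^2-d0^2-d1^2+d2^2+d3^2))*hq + (-a1*c1 + a2*c2 + a3*c3 - d0*b0 - d1*b1 + d2*b2 + d3*b3)*hp
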